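/- A nontrivial bipartite graph G is square-complementary if and only if G has diameter 3 and G is isomorphic to its bipartite complement. -/

import Mathlib

set_option linter.unusedSectionVars false
set_option linter.unusedVariables false

open SimpleGraph

/-- The square of a graph: two distinct vertices are adjacent iff they are at
distance at most 2 in `G`, i.e. adjacent or having a common neighbor. -/
def SimpleGraph.square {V : Type*} (G : SimpleGraph V) : SimpleGraph V where
  Adj u v := u ≠ v ∧ (G.Adj u v ∨ ∃ w, G.Adj u w ∧ G.Adj w v)
  symm := ⟨by
    rintro u v ⟨h, h' | ⟨w, hw1, hw2⟩⟩
    · exact ⟨h.symm, Or.inl h'.symm⟩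
    · exact ⟨h.symm, Or.inr ⟨w, hw2.symm, hw1.symm⟩⟩⟩
  loopless := ⟨by rintro v ⟨h, -⟩; exact h rfl⟩

/-- A graph is square-complementary (squco) if its square is isomorphic to its
complement. -/
def SimpleGraph.IsSquco {V : Type*} (G : SimpleGraph V) : Prop :=
  Nonempty (G.square ≃g Gᶜ)

/-- `{A, B}` is a bipartition of `G`: the two sets partition the vertex set and
every edge of `G` joins a vertex of `A` to a vertex of `B`. -/
def SimpleGraph.IsBipartitionOf {V : Type*} (G : SimpleGraph V) (A B : Set V) : Prop :=
  (∀ v, v ∈ A ↔ v ∉ B) ∧ ∀ ⦃u v⦄, G.Adj u v → (u ∈ A ∧ v ∈ B) ∨ (u ∈ B ∧ v ∈ A)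

/-- The bipartite complement of `G` with respect to the bipartition `{A, B}`:
its edges are exactly the non-edges of `G` joining `A` and `B`. -/
def SimpleGraph.bipCompl {V : Type*} (G : SimpleGraph V) (A B : Set V) : SimpleGraph V where
  Adj u v := u ≠ v ∧ ((u ∈ A ∧ v ∈ B) ∨ (u ∈ B ∧ v ∈ A)) ∧ ¬ G.Adj u v
  symm := ⟨by
    rintro u v ⟨hne, hAB | hBA, hn⟩
    · exact ⟨hne.symm, Or.inr ⟨hAB.2, hAB.1⟩, fun h => hn h.symm⟩
    · exact ⟨hne.symm, Or.inl ⟨hBA.2, hBA.1⟩, fun h => hn h.symm⟩⟩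
  loopless := ⟨by rintro v ⟨h, -⟩; exact h rfl⟩

namespace Squco

variable {V : Type*}

/-- common neighbor -/
def cn (G : SimpleGraph V) (x y : V) : Prop := ∃ w, G.Adj x w ∧ G.Adj w y

lemma cn_symm {G : SimpleGraph V} {x y : V} (h : cn G x y) : cn G y x := by
  obtain ⟨w, h1, h2⟩ := h; exact ⟨w, h2.symm, h1.symm⟩

lemma square_adj {G : SimpleGraph V} {x y : V} :
    G.square.Adj x y ↔ x ≠ y ∧ (G.Adj x y ∨ cn G x y) := Iff.rfl

/-- the far set: vertices at distance ≥ 3 (or unreachable) -/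
def farSet (G : SimpleGraph V) (x : V) : Set V := {y | x ≠ y ∧ ¬ G.square.Adj x y}

lemma farSet_eq_nbhd {G : SimpleGraph V} (x : V) :
    (G.square)ᶜ.neighborSet x = farSet G x := by
  ext y; simp [farSet, compl_adj]

lemma mem_farSet {G : SimpleGraph V} {x y : V} :
    y ∈ farSet G x ↔ x ≠ y ∧ ¬G.Adj x y ∧ ¬cn G x y := by
  constructor
  · rintro ⟨hne, hn⟩
    rw [square_adj] at hn
    push_neg at hn
    exact ⟨hne, hn hne⟩
  · rintro ⟨hne, h1, h2⟩
    refine ⟨hne, fun hsq => ?_⟩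
    rcases square_adj.mp hsq with ⟨-, h | h⟩
    · exact h1 h
    · exact h2 h

lemma farSet_symm {G : SimpleGraph V} {x y : V} (h : y ∈ farSet G x) : x ∈ farSet G y := by
  rw [mem_farSet] at h ⊢
  exact ⟨h.1.symm, fun ha => h.2.1 ha.symm, fun hc => h.2.2 (cn_symm hc)⟩

/-- the class of vertices in A whose neighborhood equals that of u -/
def cl1 (G : SimpleGraph V) (A : Set V) (u : V) : Set V :=
  {x | x ∈ A ∧ G.neighborSet x = G.neighborSet u}

/-- the class of vertices in A whose neighborhood strictly contains that of u -/
def clM (G : SimpleGraph V) (A : Set V) (u : V) : Set V :=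
  {x | x ∈ A ∧ G.neighborSet u ⊂ G.neighborSet x}

section Bip

variable {G : SimpleGraph V} {A B : Set V}

lemma bip_mem_cases (hbip : G.IsBipartitionOf A B) (x : V) : x ∈ A ∨ x ∈ B := by
  by_cases h : x ∈ B
  · exact Or.inr h
  · exact Or.inl ((hbip.1 x).mpr h)

lemma bip_not_both (hbip : G.IsBipartitionOf A B) {x : V} (hA : x ∈ A) (hB : x ∈ B) : False :=
  (hbip.1 x).mp hA hB

lemma bip_cross (hbip : G.IsBipartitionOf A B) {x y : V} (h : G.Adj x y) (hx : x ∈ A) : y ∈ B := by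
  have h1 := hbip.1 x
  have h2 := hbip.1 y
  have h3 := hbip.2 h
  tauto

lemma bip_cross' (hbip : G.IsBipartitionOf A B) {x y : V} (h : G.Adj x y) (hx : x ∈ B) : y ∈ A := by
  have h1 := hbip.1 x
  have h2 := hbip.1 y
  have h3 := hbip.2 h
  tauto

lemma bip_not_adj_A (hbip : G.IsBipartitionOf A B) {x y : V} (hx : x ∈ A) (hy : y ∈ A)
    (h : G.Adj x y) : False :=
  bip_not_both hbip hy (bip_cross hbip h hx)

lemma bip_not_adj_B (hbip : G.IsBipartitionOf A B) {x y : V} (hx : x ∈ B) (hy : y ∈ B)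
    (h : G.Adj x y) : False :=
  bip_not_both hbip (bip_cross' hbip h hx) hy

lemma bip_nbr_B (hbip : G.IsBipartitionOf A B) {x : V} (hx : x ∈ A) :
    G.neighborSet x ⊆ B := fun _ hy => bip_cross hbip hy hx

lemma bip_nbr_A (hbip : G.IsBipartitionOf A B) {x : V} (hx : x ∈ B) :
    G.neighborSet x ⊆ A := fun _ hy => bip_cross' hbip hy hx

lemma bip_no_cn_cross (hbip : G.IsBipartitionOf A B) {x y : V} (hx : x ∈ A) (hy : y ∈ B)
    (h : cn G x y) : False := by
  obtain ⟨w, h1, h2⟩ := h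
  exact bip_not_adj_B hbip (bip_cross hbip h1 hx) hy h2

lemma cn_iff_inter {G : SimpleGraph V} {x y : V} :
    cn G x y ↔ (G.neighborSet x ∩ G.neighborSet y).Nonempty := by
  constructor
  · rintro ⟨w, h1, h2⟩; exact ⟨w, h1, h2.symm⟩
  · rintro ⟨w, h1, h2⟩; exact ⟨w, h1, (G.adj_symm h2 : G.Adj w y)⟩

lemma bip_flip (hbip : G.IsBipartitionOf A B) {x y : V} (h : G.Adj x y) : x ∈ A ↔ y ∉ A := by
  have h1 := hbip.1 x
  have h2 := hbip.1 y
  have h3 := hbip.2 h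
  tauto

end Bip

section Main

variable [Fintype V]

variable {G : SimpleGraph V} {A B : Set V} {u v : V}

/-- from ψ : G.square ≃g Gᶜ get φ : (G.square)ᶜ ≃g G -/
def phiOf (ψ : G.square ≃g Gᶜ) : (G.square)ᶜ ≃g G where
  toEquiv := ψ.toEquiv
  map_rel_iff' := by
    intro a b
    simp only [compl_adj]
    constructor
    · intro had
      have hne : a ≠ b := fun h => G.loopless.irrefl _ (h ▸ had)
      refine ⟨hne, fun hsq => ?_⟩
      have := ψ.map_rel_iff.mpr hsq
      rw [compl_adj] at this
      exact this.2 had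
    · rintro ⟨hne, hnsq⟩
      by_contra hnadj
      have : Gᶜ.Adj (ψ a) (ψ b) := ⟨fun h => hne (ψ.toEquiv.injective h), hnadj⟩
      exact hnsq (ψ.map_rel_iff.mp this)

lemma map_nbhd {X Y : SimpleGraph V} (e : X ≃g Y) (x : V) :
    Y.neighborSet (e x) = e.toEquiv '' (X.neighborSet x) := by
  ext y
  simp only [mem_neighborSet, Set.mem_image]
  constructor
  · intro h
    refine ⟨e.symm y, ?_, by simp⟩
    have h2 : Y.Adj (e x) (e (e.symm y)) := by simpa using h
    exact e.map_rel_iff.mp h2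
  · rintro ⟨z, hz, rfl⟩
    exact e.map_rel_iff.mpr hz

/-- the context of a bad pair in a bipartite squco graph -/
structure Ctx (G : SimpleGraph V) (A B : Set V) (u v : V) : Prop where
  bip : G.IsBipartitionOf A B
  noiso : ∀ x : V, ∃ y, G.Adj x y
  no3 : ∀ x y z : V, x ≠ y → x ≠ z → y ≠ z → ¬G.square.Adj x y → ¬G.square.Adj x z →
    ¬G.square.Adj y z → False
  hu : u ∈ A
  hv : v ∈ A
  hne : u ≠ v
  hncn : ¬ cn G u v

namespace Ctx

lemma symm (h : Ctx G A B u v) : Ctx G A B v u :=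
  ⟨h.bip, h.noiso, h.no3, h.hv, h.hu, h.hne.symm, fun hc => h.hncn (cn_symm hc)⟩

lemma nadj (h : Ctx G A B u v) : ¬ G.Adj u v := fun ha => bip_not_adj_A h.bip h.hu h.hv ha

lemma disjNuNv (h : Ctx G A B u v) {z : V} (h1 : z ∈ G.neighborSet u)
    (h2 : z ∈ G.neighborSet v) : False :=
  h.hncn ⟨z, h1, (G.adj_symm h2 : G.Adj z v)⟩

lemma Nu_nonempty (h : Ctx G A B u v) : (G.neighborSet u).Nonempty := h.noiso u

lemma Nu_sub_B (h : Ctx G A B u v) : G.neighborSet u ⊆ B := bip_nbr_B h.bip h.hu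

lemma mem_far_uv (h : Ctx G A B u v) : v ∈ farSet G u :=
  mem_farSet.mpr ⟨h.hne, h.nadj, h.hncn⟩

/-- every vertex of B is adjacent to u or to v -/
lemma F1 (h : Ctx G A B u v) {z : V} (hz : z ∈ B) : G.Adj u z ∨ G.Adj v z := by
  by_contra hn
  push_neg at hn
  have hzu : z ≠ u := fun he => bip_not_both h.bip h.hu (he ▸ hz)
  have hzv : z ≠ v := fun he => bip_not_both h.bip h.hv (he ▸ hz)
  have h1 : ¬G.square.Adj u v := by
    rw [square_adj]; push_neg; exact fun _ => ⟨h.nadj, h.hncn⟩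
  have h2 : ¬G.square.Adj u z := by
    rw [square_adj]; push_neg
    exact fun _ => ⟨hn.1, fun hc => bip_no_cn_cross h.bip h.hu hz hc⟩
  have h3 : ¬G.square.Adj v z := by
    rw [square_adj]; push_neg
    exact fun _ => ⟨hn.2, fun hc => bip_no_cn_cross h.bip h.hv hz hc⟩
  exact h.no3 u v z h.hne hzu.symm hzv.symm h1 h2 h3

/-- B = N(u) ⊔ N(v) : the neighborhood of v is the complement of N(u) in B -/
lemma nbhd_v_eq (h : Ctx G A B u v) : G.neighborSet v = B \ G.neighborSet u := by
  ext z
  constructor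
  · intro hz
    exact ⟨bip_nbr_B h.bip h.hv hz, fun hzu => h.disjNuNv hzu hz⟩
  · rintro ⟨hzB, hzu⟩
    rcases h.F1 hzB with h1 | h2
    · exact absurd h1 hzu
    · exact h2

lemma mk_pair (h : Ctx G A B u v) {x y : V} (hx : x ∈ A) (hy : y ∈ A) (hxy : x ≠ y)
    (hnc : ¬cn G x y) : Ctx G A B x y :=
  ⟨h.bip, h.noiso, h.no3, hx, hy, hxy, hnc⟩

lemma mem_A1 (h : Ctx G A B u v) : u ∈ cl1 G A u := ⟨h.hu, rfl⟩

lemma mem_A2 (h : Ctx G A B u v) : v ∈ cl1 G A v := ⟨h.hv, rfl⟩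

lemma Nu_ne_Nv (h : Ctx G A B u v) : G.neighborSet u ≠ G.neighborSet v := by
  intro he
  obtain ⟨z, hz⟩ := h.Nu_nonempty
  exact h.disjNuNv hz (he ▸ hz)

lemma A1_disj_A2 (h : Ctx G A B u v) {x : V} (h1 : x ∈ cl1 G A u) (h2 : x ∈ cl1 G A v) :
    False := h.Nu_ne_Nv (h1.2 ▸ h2.2)

lemma A1_disj_M1 (h : Ctx G A B u v) {x : V} (h1 : x ∈ cl1 G A u) (h2 : x ∈ clM G A u) :
    False := h2.2.ne' h1.2

lemma A1_disj_M2 (h : Ctx G A B u v) {x : V} (h1 : x ∈ cl1 G A u) (h2 : x ∈ clM G A v) :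
    False := by
  obtain ⟨z, hz⟩ := h.symm.Nu_nonempty
  exact h.disjNuNv (h1.2 ▸ h2.2.1 hz) hz

end Ctx

lemma adj_far (φ : (G.square)ᶜ ≃g G) {x y : V} (hf : y ∈ farSet G x) : G.Adj (φ x) (φ y) := by
  apply φ.map_rel_iff.mpr
  rw [← mem_neighborSet, farSet_eq_nbhd]
  exact hf

lemma nbhd_phi (φ : (G.square)ᶜ ≃g G) (x : V) :
    G.neighborSet (φ x) = φ.toEquiv '' farSet G x := by
  rw [map_nbhd φ x, farSet_eq_nbhd]

namespace Ctx

/-- no vertex of A is adjacent to all of B -/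
lemma no_full (h : Ctx G A B u v) (φ : (G.square)ᶜ ≃g G) {x : V} (hx : x ∈ A)
    (hfull : B ⊆ G.neighborSet x) : False := by
  have hfar : farSet G x = ∅ := by
    ext y
    simp only [Set.mem_empty_iff_false, iff_false]
    intro hy
    rw [mem_farSet] at hy
    rcases bip_mem_cases h.bip y with hyA | hyB
    · obtain ⟨w, hw⟩ := h.noiso y
      have hwB : w ∈ B := bip_cross h.bip hw hyA
      exact hy.2.2 ⟨w, (hfull hwB : G.Adj x w), (G.adj_symm hw : G.Adj w y)⟩
    · exact hy.2.1 (hfull hyB)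
  obtain ⟨w, hw⟩ := h.noiso (φ x)
  have : w ∈ G.neighborSet (φ x) := hw
  rw [nbhd_phi φ x, hfar] at this
  simp at this

lemma M1_disj_M2 (h : Ctx G A B u v) (φ : (G.square)ᶜ ≃g G) {x : V} (h1 : x ∈ clM G A u)
    (h2 : x ∈ clM G A v) : False := by
  apply h.no_full φ h1.1
  intro z hz
  rcases h.F1 hz with hzu | hzv
  · exact h1.2.1 hzu
  · exact h2.2.1 hzv

/-- a vertex of A with no common neighbor with v lies in the class of u -/
lemma mem_A1_of_not_cn (h : Ctx G A B u v) {x : V} (hx : x ∈ A) (hcv : ¬ cn G x v) :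
    x ∈ cl1 G A u := by
  have hxv : x ≠ v := by
    rintro rfl
    obtain ⟨z, hz⟩ := h.symm.Nu_nonempty
    exact hcv ⟨z, hz, G.adj_symm hz⟩
  have hctx : Ctx G A B x v := h.mk_pair hx h.hv hxv hcv
  have h1 : G.neighborSet x = B \ G.neighborSet v := hctx.symm.nbhd_v_eq
  have h2 : G.neighborSet u = B \ G.neighborSet v := h.symm.nbhd_v_eq
  exact ⟨hx, h1.trans h2.symm⟩

/-- classification of the vertices of A into the four classes -/
lemma classify (h : Ctx G A B u v) (φ : (G.square)ᶜ ≃g G) {x : V} (hx : x ∈ A) :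
    x ∈ cl1 G A u ∨ x ∈ cl1 G A v ∨ x ∈ clM G A u ∨ x ∈ clM G A v := by
  by_cases hcv : cn G x v
  case neg => exact Or.inl (h.mem_A1_of_not_cn hx hcv)
  by_cases hcu : cn G x u
  case neg => exact Or.inr (Or.inl (h.symm.mem_A1_of_not_cn hx hcu))
  · -- x has common neighbors with both u and v
      by_cases hsu : G.neighborSet u ⊆ G.neighborSet x
      · right; right; left
        refine ⟨hx, hsu, fun hxu => ?_⟩
        obtain ⟨w, hw1, hw2⟩ := hcv
        exact h.disjNuNv (hxu hw1) (G.adj_symm hw2)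
      · by_cases hsv : G.neighborSet v ⊆ G.neighborSet x
        · right; right; right
          refine ⟨hx, hsv, fun hxv => ?_⟩
          obtain ⟨w, hw1, hw2⟩ := hcu
          exact h.disjNuNv (G.adj_symm hw2) (hxv hw1)
        · -- five-cycle contradiction
          exfalso
          obtain ⟨z1, hz1u, hz1x⟩ := Set.not_subset.mp hsu
          obtain ⟨z2, hz2v, hz2x⟩ := Set.not_subset.mp hsv
          have hz1B : z1 ∈ B := h.Nu_sub_B hz1u
          have hz2B : z2 ∈ B := h.symm.Nu_sub_B hz2v
          have far1 : z1 ∈ farSet G x := mem_farSet.mpr ⟨fun he => bip_not_both h.bip hx (he ▸ hz1B),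
            fun ha => hz1x ha, fun hc => bip_no_cn_cross h.bip hx hz1B hc⟩
          have far2 : z2 ∈ farSet G x := mem_farSet.mpr ⟨fun he => bip_not_both h.bip hx (he ▸ hz2B),
            fun ha => hz2x ha, fun hc => bip_no_cn_cross h.bip hx hz2B hc⟩
          have far3 : z2 ∈ farSet G u := mem_farSet.mpr ⟨fun he => bip_not_both h.bip h.hu (he ▸ hz2B),
            fun ha => h.disjNuNv ha hz2v, fun hc => bip_no_cn_cross h.bip h.hu hz2B hc⟩
          have far4 : z1 ∈ farSet G v := mem_farSet.mpr ⟨fun he => bip_not_both h.bip h.hv (he ▸ hz1B),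
            fun ha => h.disjNuNv hz1u ha, fun hc => bip_no_cn_cross h.bip h.hv hz1B hc⟩
          have e1 := adj_far φ far1                 -- φx ~ φz1
          have e2 := adj_far φ far4                 -- φv ~ φz1
          have e3 := adj_far φ h.mem_far_uv         -- φu ~ φv
          have e4 := adj_far φ far3                 -- φu ~ φz2
          have e5 := adj_far φ far2                 -- φx ~ φz2
          have f1 := bip_flip h.bip e1
          have f2 := bip_flip h.bip e2
          have f3 := bip_flip h.bip e3
          have f4 := bip_flip h.bip e4
          have f5 := bip_flip h.bip e5
          tauto
  -- (the case cn x v ∧ ¬ cn x u gives A2 by symmetry)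

lemma B_sub (h : Ctx G A B u v) {z : V} (hz : z ∈ B) :
    z ∈ G.neighborSet u ∨ z ∈ G.neighborSet v := h.F1 hz

lemma adj_of_cl1 (h : Ctx G A B u v) {x z : V} (h1 : x ∈ cl1 G A u)
    (hz : z ∈ G.neighborSet u) : G.Adj x z := by
  have : z ∈ G.neighborSet x := by rw [h1.2]; exact hz
  exact this

lemma adj_of_clM (h : Ctx G A B u v) {x z : V} (h1 : x ∈ clM G A u)
    (hz : z ∈ G.neighborSet u) : G.Adj x z := h1.2.1 hz

/-- members of the class of u are adjacent to every neighbor of u -/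
lemma cl1_sub_nbhd (h : Ctx G A B u v) {z x : V} (hz : z ∈ G.neighborSet u)
    (hx : x ∈ cl1 G A u) : x ∈ G.neighborSet z := by
  have : z ∈ G.neighborSet x := hx.2 ▸ hz
  exact G.adj_symm this

lemma clM_sub_nbhd (h : Ctx G A B u v) {z x : V} (hz : z ∈ G.neighborSet u)
    (hx : x ∈ clM G A u) : x ∈ G.neighborSet z := by
  have : z ∈ G.neighborSet x := hx.2.1 hz
  exact G.adj_symm this

/-- extra neighbors of an M1 vertex lie in N(v) -/
lemma clM_extra (h : Ctx G A B u v) {x w : V} (hx : x ∈ clM G A u)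
    (hw : w ∈ G.neighborSet x) (hwu : w ∉ G.neighborSet u) : w ∈ G.neighborSet v := by
  have hwB : w ∈ B := bip_nbr_B h.bip hx.1 hw
  rcases h.F1 hwB with h1 | h2
  · exact absurd h1 hwu
  · exact h2

lemma clM_meets_Nv (h : Ctx G A B u v) {x : V} (hx : x ∈ clM G A u) :
    ∃ w, w ∈ G.neighborSet x ∧ w ∈ G.neighborSet v := by
  obtain ⟨w, hw1, hw2⟩ := Set.exists_of_ssubset hx.2
  exact ⟨w, hw1, h.clM_extra hx hw1 hw2⟩

/-- far set of a class-of-u vertex -/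
lemma far_cl1 (h : Ctx G A B u v) (φ : (G.square)ᶜ ≃g G) {x : V} (hx : x ∈ cl1 G A u) :
    farSet G x = cl1 G A v ∪ G.neighborSet v := by
  ext y
  constructor
  · intro hy
    rw [mem_farSet] at hy
    obtain ⟨hne, hnadj, hncn⟩ := hy
    rcases bip_mem_cases h.bip y with hyA | hyB
    · rcases h.classify φ hyA with h1 | h2 | h3 | h4
      · exfalso
        obtain ⟨z, hz⟩ := h.Nu_nonempty
        exact hncn ⟨z, h.adj_of_cl1 hx hz, G.adj_symm (h.adj_of_cl1 h1 hz)⟩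
      · exact Or.inl h2
      · exfalso
        obtain ⟨z, hz⟩ := h.Nu_nonempty
        exact hncn ⟨z, h.adj_of_cl1 hx hz, G.adj_symm (h.adj_of_clM h3 hz)⟩
      · exfalso
        obtain ⟨w, hw1, hw2⟩ := h.symm.clM_meets_Nv h4
        exact hncn ⟨w, h.adj_of_cl1 hx hw2, G.adj_symm hw1⟩
    · rcases h.F1 hyB with h1 | h2
      · exact absurd (h.adj_of_cl1 hx h1) hnadj
      · exact Or.inr h2
  · intro hy
    rcases hy with hy | hy
    · rw [mem_farSet]
      refine ⟨?_, ?_, ?_⟩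
      · rintro rfl; exact h.Nu_ne_Nv (hx.2.symm.trans hy.2)
      · intro ha; exact bip_not_adj_A h.bip hx.1 hy.1 ha
      · rintro ⟨w, hw1, hw2⟩
        have hw1' : w ∈ G.neighborSet u := by rw [← hx.2]; exact hw1
        have hw2' : w ∈ G.neighborSet v := by rw [← hy.2]; exact G.adj_symm hw2
        exact h.disjNuNv hw1' hw2'
    · rw [mem_farSet]
      have hyB : y ∈ B := h.symm.Nu_sub_B hy
      refine ⟨fun he => bip_not_both h.bip hx.1 (he ▸ hyB), ?_, ?_⟩
      · intro ha
        have : y ∈ G.neighborSet u := by rw [← hx.2]; exact ha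
        exact h.disjNuNv this hy
      · exact fun hc => bip_no_cn_cross h.bip hx.1 hyB hc

/-- far set of an M1 vertex -/
lemma far_clM_sub (h : Ctx G A B u v) (φ : (G.square)ᶜ ≃g G) {x : V} (hx : x ∈ clM G A u) :
    farSet G x ⊆ G.neighborSet v \ G.neighborSet x := by
  intro y hy
  rw [mem_farSet] at hy
  obtain ⟨hne, hnadj, hncn⟩ := hy
  obtain ⟨w, hwx, hwv⟩ := h.clM_meets_Nv hx
  rcases bip_mem_cases h.bip y with hyA | hyB
  · exfalso
    rcases h.classify φ hyA with h1 | h2 | h3 | h4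
    · obtain ⟨z, hz⟩ := h.Nu_nonempty
      exact hncn ⟨z, hx.2.1 hz, G.adj_symm (h.adj_of_cl1 h1 hz)⟩
    · exact hncn ⟨w, hwx, G.adj_symm (h.symm.adj_of_cl1 h2 hwv)⟩
    · obtain ⟨z, hz⟩ := h.Nu_nonempty
      exact hncn ⟨z, hx.2.1 hz, G.adj_symm (h.adj_of_clM h3 hz)⟩
    · exact hncn ⟨w, hwx, G.adj_symm (h.symm.adj_of_clM h4 hwv)⟩
  · rcases h.F1 hyB with h1 | h2
    · exact (hnadj (hx.2.1 h1)).elim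
    · exact ⟨h2, fun hyx => hnadj hyx⟩

/-- far set of a neighbor of u : bounds -/
lemma far_Nu_sub (h : Ctx G A B u v) (φ : (G.square)ᶜ ≃g G) {z : V} (hz : z ∈ G.neighborSet u) :
    farSet G z ⊆ cl1 G A v ∪ clM G A v ∪ G.neighborSet v := by
  intro y hy
  rw [mem_farSet] at hy
  obtain ⟨hne, hnadj, hncn⟩ := hy
  rcases bip_mem_cases h.bip y with hyA | hyB
  · rcases h.classify φ hyA with h1 | h2 | h3 | h4
    · exact (hnadj (G.adj_symm (h.adj_of_cl1 h1 hz))).elim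
    · exact Or.inl (Or.inl h2)
    · exact (hnadj (G.adj_symm (h.adj_of_clM h3 hz))).elim
    · exact Or.inl (Or.inr h4)
  · rcases h.F1 hyB with h1 | h2
    · exfalso
      exact hncn ⟨u, G.adj_symm hz, h1⟩
    · exact Or.inr h2

lemma A2_sub_far_Nu (h : Ctx G A B u v) {z : V} (hz : z ∈ G.neighborSet u) :
    cl1 G A v ⊆ farSet G z := by
  intro y hy
  have hzB : z ∈ B := h.Nu_sub_B hz
  rw [mem_farSet]
  refine ⟨fun he => bip_not_both h.bip hy.1 (he ▸ hzB), ?_, ?_⟩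
  · intro ha
    have : z ∈ G.neighborSet v := by rw [← hy.2]; exact G.adj_symm ha
    exact h.disjNuNv hz this
  · intro hc
    exact bip_no_cn_cross h.bip hy.1 hzB (cn_symm hc)

/-- the universal cardinality kill : no M1 vertex can be mapped to v by φ -/
lemma kill_M1 (h : Ctx G A B u v) (φ : (G.square)ᶜ ≃g G) {x : V} (hx : x ∈ clM G A u)
    (he : φ x = v) : False := by
  have h1 : G.neighborSet v = φ.toEquiv '' farSet G x := he ▸ nbhd_phi φ x
  have h2 : φ.toEquiv '' farSet G x ⊆ φ.toEquiv '' (G.neighborSet v \ G.neighborSet x) :=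
    Set.image_mono (h.far_clM_sub φ hx)
  obtain ⟨w, hwx, hwv⟩ := h.clM_meets_Nv hx
  have hss : G.neighborSet v \ G.neighborSet x ⊂ G.neighborSet v := by
    constructor
    · exact Set.diff_subset
    · intro hsub
      exact (hsub hwv).2 hwx
  have hsub : G.neighborSet v ⊆ φ.toEquiv '' (G.neighborSet v \ G.neighborSet x) := by
    intro w hw
    rw [h1] at hw
    exact h2 hw
  have hc1 : (G.neighborSet v).ncard ≤ (G.neighborSet v \ G.neighborSet x).ncard := by
    calc (G.neighborSet v).ncard
        ≤ (φ.toEquiv '' (G.neighborSet v \ G.neighborSet x)).ncard :=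
          Set.ncard_le_ncard hsub (Set.toFinite _)
      _ = (G.neighborSet v \ G.neighborSet x).ncard :=
          Set.ncard_image_of_injective _ φ.toEquiv.injective
  have hc2 : (G.neighborSet v \ G.neighborSet x).ncard < (G.neighborSet v).ncard :=
    Set.ncard_lt_ncard hss (Set.toFinite _)
  omega

lemma side_A_of_nbr (h : Ctx G A B u v) {y w : V} (hw : w ∈ G.neighborSet y) (hwB : w ∈ B) :
    y ∈ A := bip_cross' h.bip (G.adj_symm hw) hwB

lemma side_B_of_nbr (h : Ctx G A B u v) {y w : V} (hw : w ∈ G.neighborSet y) (hwA : w ∈ A) :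
    y ∈ B := bip_cross h.bip (G.adj_symm hw) hwA

lemma mem_A1_of_nbhd (h : Ctx G A B u v) {y : V} (hy : G.neighborSet y = G.neighborSet u) :
    y ∈ cl1 G A u := by
  obtain ⟨z, hz⟩ := h.Nu_nonempty
  exact ⟨h.side_A_of_nbr (hy ▸ hz : z ∈ G.neighborSet y) (h.Nu_sub_B hz), hy⟩

lemma mem_M1_of_nbhd (h : Ctx G A B u v) {y : V} (hy : G.neighborSet u ⊂ G.neighborSet y) :
    y ∈ clM G A u := by
  obtain ⟨z, hz⟩ := h.Nu_nonempty
  exact ⟨h.side_A_of_nbr (hy.1 hz) (h.Nu_sub_B hz), hy⟩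

lemma far_u_eq (h : Ctx G A B u v) (φ : (G.square)ᶜ ≃g G) :
    farSet G u = cl1 G A v ∪ G.neighborSet v := h.far_cl1 φ h.mem_A1

lemma nphi_u (h : Ctx G A B u v) (φ : (G.square)ᶜ ≃g G) :
    G.neighborSet (φ u) = φ.toEquiv '' (cl1 G A v ∪ G.neighborSet v) := by
  rw [nbhd_phi, h.far_u_eq φ]

lemma nphi_cl1 (h : Ctx G A B u v) (φ : (G.square)ᶜ ≃g G) {a : V} (ha : a ∈ cl1 G A u) :
    G.neighborSet (φ a) = G.neighborSet (φ u) := by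
  rw [nbhd_phi, nbhd_phi, h.far_cl1 φ ha, h.far_u_eq φ]

/-- images of A2 vertices are neighbors of s = φ u -/
lemma mem_Ns_A2 (h : Ctx G A B u v) (φ : (G.square)ᶜ ≃g G) {a : V} (ha : a ∈ cl1 G A v) :
    φ a ∈ G.neighborSet (φ u) := by
  have : a ∈ farSet G u := (h.far_u_eq φ) ▸ Or.inl ha
  exact adj_far φ this

lemma mem_Ns_Nv (h : Ctx G A B u v) (φ : (G.square)ᶜ ≃g G) {z : V} (hz : z ∈ G.neighborSet v) :
    φ z ∈ G.neighborSet (φ u) := by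
  have : z ∈ farSet G u := (h.far_u_eq φ) ▸ Or.inr hz
  exact adj_far φ this

/-- images of neighbors of u are neighbors of t = φ v -/
lemma mem_Nt_Nu (h : Ctx G A B u v) (φ : (G.square)ᶜ ≃g G) {z : V} (hz : z ∈ G.neighborSet u) :
    φ z ∈ G.neighborSet (φ v) := by
  have h1 : v ∈ farSet G z := h.A2_sub_far_Nu hz h.mem_A2
  exact adj_far φ (farSet_symm h1)

lemma adj_st (h : Ctx G A B u v) (φ : (G.square)ᶜ ≃g G) : G.Adj (φ u) (φ v) :=
  adj_far φ h.mem_far_uv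

/-- cardinality helper : |S ∪ T| = |S| + |T| for S ⊆ A, T ⊆ B -/
lemma card_union_AB (h : Ctx G A B u v) {S T : Set V} (hS : S ⊆ A) (hT : T ⊆ B) :
    (S ∪ T).ncard = S.ncard + T.ncard := by
  apply Set.ncard_union_eq _ (Set.toFinite _) (Set.toFinite _)
  exact Set.disjoint_left.mpr fun x hx hx2 => bip_not_both h.bip (hS hx) (hT hx2)

lemma ncard_img (φ : (G.square)ᶜ ≃g G) (S : Set V) :
    (φ.toEquiv '' S).ncard = S.ncard :=
  Set.ncard_image_of_injective _ φ.toEquiv.injective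

/-- CASE s ∈ A2 -/
lemma case_A2 (h : Ctx G A B u v) (φ : (G.square)ᶜ ≃g G) (hs : φ u ∈ cl1 G A v) : False := by
  have h1 : G.neighborSet v = φ.toEquiv '' (cl1 G A v ∪ G.neighborSet v) :=
    hs.2.symm.trans (h.nphi_u φ)
  have h2 := h.card_union_AB (fun x (hx : x ∈ cl1 G A v) => hx.1) h.symm.Nu_sub_B
  have h3 := congrArg Set.ncard h1
  rw [ncard_img, h2] at h3
  have h4 : (cl1 G A v).ncard ≠ 0 := by
    have : (cl1 G A v).Nonempty := ⟨v, h.mem_A2⟩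
    simpa [Set.ncard_eq_zero (Set.toFinite _)] using this.ne_empty
  omega

/-- CASE s ∈ A1 -/
lemma case_A1 (h : Ctx G A B u v) (φ : (G.square)ᶜ ≃g G) (hs : φ u ∈ cl1 G A u) : False := by
  -- images of A2 and of Nv land inside Nu
  have hA2Nu : ∀ a ∈ cl1 G A v, φ a ∈ G.neighborSet u := fun a ha => by
    have := h.mem_Ns_A2 φ ha
    rwa [hs.2] at this
  have hA1A1 : ∀ a ∈ cl1 G A u, φ a ∈ cl1 G A u := fun a ha =>
    h.mem_A1_of_nbhd ((h.nphi_cl1 φ ha).trans hs.2)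
  have htNu : φ v ∈ G.neighborSet u := hA2Nu v h.mem_A2
  have hNuA : ∀ z ∈ G.neighborSet u, φ z ∈ A := fun z hz =>
    bip_nbr_A h.bip (h.Nu_sub_B htNu) (h.mem_Nt_Nu φ hz)
  -- chase the preimage of v
  set x := φ.symm v with hxdef
  have hxv : φ x = v := φ.toEquiv.apply_symm_apply v
  have hNx : G.neighborSet v = φ.toEquiv '' (farSet G x) := by
    rw [← hxv, nbhd_phi]
  rcases bip_mem_cases h.bip x with hxA | hxB
  · rcases h.classify φ hxA with h1 | h2 | h3 | h4
    · exact h.A1_disj_A2 (hxv ▸ hA1A1 x h1) h.mem_A2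
    · exact bip_not_both h.bip h.hv (h.Nu_sub_B (hxv ▸ hA2Nu x h2))
    · exact h.kill_M1 φ h3 hxv
    · -- x ∈ M2 : N v ⊆ φ '' Nu ⊆ A, but Nv ⊆ B
      obtain ⟨z₀, hz₀⟩ := h.symm.Nu_nonempty
      have : z₀ ∈ φ.toEquiv '' (farSet G x) := hNx ▸ hz₀
      obtain ⟨c, hc, hcz⟩ := this
      have hcNu : c ∈ G.neighborSet u := (h.symm.far_clM_sub φ h4 hc).1
      exact bip_not_both h.bip (hcz ▸ hNuA c hcNu) (h.symm.Nu_sub_B hz₀)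
  · rcases h.B_sub hxB with h1 | h2
    · -- x ∈ Nu : t ∈ φ '' far x ⊆ N v but t ∈ Nu
      have : φ v ∈ G.neighborSet v := hNx ▸ ⟨v, h.A2_sub_far_Nu h1 h.mem_A2, rfl⟩
      exact h.disjNuNv htNu this
    · -- x ∈ Nv : s ∈ N v but s ∈ A
      have : φ u ∈ G.neighborSet v := hNx ▸ ⟨u, h.symm.A2_sub_far_Nu h2 h.mem_A1, rfl⟩
      exact bip_not_both h.bip hs.1 (h.symm.Nu_sub_B this)

lemma mem_Nt_A1 (h : Ctx G A B u v) (φ : (G.square)ᶜ ≃g G) {a : V} (ha : a ∈ cl1 G A u) :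
    φ a ∈ G.neighborSet (φ v) := by
  have h1 : v ∈ farSet G a := (h.far_cl1 φ ha) ▸ Or.inl h.mem_A2
  exact adj_far φ (farSet_symm h1)

/-- the image under φ of A1 ∪ Nu ∪ M1 is exactly C, whenever φ sends these classes
into C and the other three classes outside C -/
lemma image_partition (h : Ctx G A B u v) (φ : (G.square)ᶜ ≃g G) (C : Set V)
    (hP : ∀ x, x ∈ cl1 G A u ∪ (G.neighborSet u ∪ clM G A u) → φ x ∈ C)
    (hQ : ∀ x, x ∈ cl1 G A v ∪ (G.neighborSet v ∪ clM G A v) → φ x ∉ C) :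
    C = φ.toEquiv '' (cl1 G A u ∪ (G.neighborSet u ∪ clM G A u)) := by
  ext c
  constructor
  · intro hc
    set x := φ.symm c with hxdef
    have hxc : φ x = c := φ.toEquiv.apply_symm_apply c
    have hmem : x ∈ cl1 G A u ∪ (G.neighborSet u ∪ clM G A u) := by
      rcases bip_mem_cases h.bip x with hxA | hxB
      · rcases h.classify φ hxA with h1 | h2 | h3 | h4
        · exact Or.inl h1
        · exact absurd (hxc ▸ hc) (hQ x (Or.inl h2))
        · exact Or.inr (Or.inr h3)
        · exact absurd (hxc ▸ hc) (hQ x (Or.inr (Or.inr h4)))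
      · rcases h.B_sub hxB with h1 | h2
        · exact Or.inr (Or.inl h1)
        · exact absurd (hxc ▸ hc) (hQ x (Or.inr (Or.inl h2)))
    exact ⟨x, hmem, hxc⟩
  · rintro ⟨x, hx, rfl⟩
    exact hP x hx

lemma card_triple (h : Ctx G A B u v) :
    (cl1 G A u ∪ (G.neighborSet u ∪ clM G A u)).ncard
      = (cl1 G A u).ncard + (G.neighborSet u).ncard + (clM G A u).ncard := by
  have h1 : (G.neighborSet u ∪ clM G A u).ncard
      = (clM G A u).ncard + (G.neighborSet u).ncard := by
    rw [Set.union_comm]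
    exact h.card_union_AB (fun x hx => hx.1) h.Nu_sub_B
  have h2 : (cl1 G A u ∪ (G.neighborSet u ∪ clM G A u)).ncard
      = (cl1 G A u).ncard + (G.neighborSet u ∪ clM G A u).ncard := by
    apply Set.ncard_union_eq _ (Set.toFinite _) (Set.toFinite _)
    apply Set.disjoint_left.mpr
    rintro x hx (hx2 | hx3)
    · exact bip_not_both h.bip hx.1 (h.Nu_sub_B hx2)
    · exact h.A1_disj_M1 hx hx3
  rw [h2, h1]
  omega

lemma card_B (h : Ctx G A B u v) :
    B.ncard = (G.neighborSet u).ncard + (G.neighborSet v).ncard := by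
  have hB : B = G.neighborSet u ∪ G.neighborSet v := by
    ext z
    constructor
    · intro hz; exact h.B_sub hz
    · rintro (hz | hz)
      · exact h.Nu_sub_B hz
      · exact h.symm.Nu_sub_B hz
  rw [hB]
  apply Set.ncard_union_eq _ (Set.toFinite _) (Set.toFinite _)
  exact Set.disjoint_left.mpr fun z h1 h2 => h.disjNuNv h1 h2

lemma card_A (h : Ctx G A B u v) (φ : (G.square)ᶜ ≃g G) :
    A.ncard = (cl1 G A u).ncard + (cl1 G A v).ncard
      + (clM G A u).ncard + (clM G A v).ncard := by
  have hA : A = cl1 G A u ∪ cl1 G A v ∪ clM G A u ∪ clM G A v := by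
    ext x
    constructor
    · intro hx
      rcases h.classify φ hx with h1 | h2 | h3 | h4
      · exact Or.inl (Or.inl (Or.inl h1))
      · exact Or.inl (Or.inl (Or.inr h2))
      · exact Or.inl (Or.inr h3)
      · exact Or.inr h4
    · rintro (((hx | hx) | hx) | hx) <;> exact hx.1
  conv_lhs => rw [hA]
  have d12 : Disjoint (cl1 G A u) (cl1 G A v) :=
    Set.disjoint_left.mpr fun x h1 h2 => h.A1_disj_A2 h1 h2
  have d3 : Disjoint (cl1 G A u ∪ cl1 G A v) (clM G A u) := by
    apply Set.disjoint_left.mpr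
    rintro x (h1 | h2) h3
    · exact h.A1_disj_M1 h1 h3
    · exact h.symm.A1_disj_M2 h2 h3
  have d4 : Disjoint (cl1 G A u ∪ cl1 G A v ∪ clM G A u) (clM G A v) := by
    apply Set.disjoint_left.mpr
    rintro x ((h1 | h2) | h3) h4
    · exact h.A1_disj_M2 h1 h4
    · exact h.symm.A1_disj_M1 h2 h4
    · exact h.M1_disj_M2 φ h3 h4
  have e4 := Set.ncard_union_eq d4 (Set.toFinite _) (Set.toFinite _)
  have e3 := Set.ncard_union_eq d3 (Set.toFinite _) (Set.toFinite _)
  have e12 := Set.ncard_union_eq d12 (Set.toFinite _) (Set.toFinite _)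
  rw [e4, e3, e12]

/-- the counting identity, in the version where A1, Nu, M1 map into C -/
lemma count_core (h : Ctx G A B u v) (φ : (G.square)ᶜ ≃g G) (C : Set V)
    (hP : ∀ x, x ∈ cl1 G A u ∪ (G.neighborSet u ∪ clM G A u) → φ x ∈ C)
    (hQ : ∀ x, x ∈ cl1 G A v ∪ (G.neighborSet v ∪ clM G A v) → φ x ∉ C) :
    C.ncard = (cl1 G A u).ncard + (G.neighborSet u).ncard + (clM G A u).ncard := by
  have h1 := congrArg Set.ncard (h.image_partition φ C hP hQ)
  rw [ncard_img, h.card_triple] at h1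
  exact h1

/-- CASE s ∈ M1 -/
lemma case_M1 (h : Ctx G A B u v) (φ : (G.square)ᶜ ≃g G) (hs : φ u ∈ clM G A u) : False := by
  have hsA : φ u ∈ A := hs.1
  have hNsB : G.neighborSet (φ u) ⊆ B := bip_nbr_B h.bip hsA
  have htNs : φ v ∈ G.neighborSet (φ u) := h.adj_st φ
  have htB : φ v ∈ B := hNsB htNs
  have hstA : φ u ∈ G.neighborSet (φ v) := G.adj_symm (h.adj_st φ)
  have hNtA : G.neighborSet (φ v) ⊆ A := bip_nbr_A h.bip htB
  have hA1M1 : ∀ a ∈ cl1 G A u, φ a ∈ clM G A u := fun a ha =>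
    h.mem_M1_of_nbhd (by rw [h.nphi_cl1 φ ha]; exact hs.2)
  -- the preimage of v
  set x := φ.symm v with hxdef
  have hxv : φ x = v := φ.toEquiv.apply_symm_apply v
  have hNx : G.neighborSet v = φ.toEquiv '' (farSet G x) := by rw [← hxv, nbhd_phi]
  -- generic kills for the x-chase
  have killA1 : x ∈ cl1 G A u → False := by
    intro h1
    have h5 : G.neighborSet v = G.neighborSet (φ u) := by rw [← hxv]; exact h.nphi_cl1 φ h1
    obtain ⟨z, hz⟩ := h.Nu_nonempty
    exact h.disjNuNv hz (h5 ▸ hs.2.1 hz)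
  have killNv : x ∈ G.neighborSet v → False := by
    intro h2
    have h5 : φ u ∈ G.neighborSet v := hNx ▸ ⟨u, h.symm.A2_sub_far_Nu h2 h.mem_A1, rfl⟩
    exact bip_not_adj_A h.bip h.hv hsA h5
  rcases h.B_sub htB with htNu | htNv
  · -- SUBCASE t ∈ Nu
    have hA2Nu : ∀ a ∈ cl1 G A v, φ a ∈ G.neighborSet u := fun a ha => by
      have h1 : u ∈ G.neighborSet (φ a) := by
        rw [h.symm.nphi_cl1 φ ha]
        exact G.adj_symm htNu
      exact G.adj_symm h1
    rcases bip_mem_cases h.bip x with hxA | hxB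
    · rcases h.classify φ hxA with h1 | h2 | h3 | h4
      · exact killA1 h1
      · exact bip_not_both h.bip h.hv (h.Nu_sub_B (hxv ▸ hA2Nu x h2))
      · exact h.kill_M1 φ h3 hxv
      · obtain ⟨z₀, hz₀⟩ := h.symm.Nu_nonempty
        obtain ⟨c, hc, hcz⟩ := hNx ▸ hz₀
        have hcNu : c ∈ G.neighborSet u := (h.symm.far_clM_sub φ h4 hc).1
        exact bip_not_both h.bip (hcz ▸ hNtA (h.mem_Nt_Nu φ hcNu)) (h.symm.Nu_sub_B hz₀)
    · rcases h.B_sub hxB with h1 | h2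
      · have h5 : φ v ∈ G.neighborSet v := hNx ▸ ⟨v, h.A2_sub_far_Nu h1 h.mem_A2, rfl⟩
        exact h.disjNuNv htNu h5
      · exact killNv h2
  · -- SUBCASE t ∈ Nv
    -- placements of the six classes
    have hP : ∀ y, y ∈ cl1 G A u ∪ (G.neighborSet u ∪ clM G A u) → φ y ∈ A := by
      rintro y (h1 | h2 | h3)
      · exact (hA1M1 y h1).1
      · exact hNtA (h.mem_Nt_Nu φ h2)
      · -- M1 vertices map into A
        obtain ⟨b, hb⟩ := h.noiso (φ y)
        have hbN : b ∈ G.neighborSet (φ y) := hb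
        rw [nbhd_phi] at hbN
        obtain ⟨c, hc, hcb⟩ := hbN
        have hcNv : c ∈ G.neighborSet v := (h.far_clM_sub φ h3 hc).1
        have hbB : b ∈ B := hNsB (hcb ▸ h.mem_Ns_Nv φ hcNv)
        exact h.side_A_of_nbr hb hbB
    have hQ : ∀ y, y ∈ cl1 G A v ∪ (G.neighborSet v ∪ clM G A v) → φ y ∉ A := by
      have toB : ∀ y, φ y ∈ B → φ y ∉ A := fun y hB hA => bip_not_both h.bip hA hB
      rintro y (h1 | h2 | h3)
      · apply toB
        have h5 : φ u ∈ G.neighborSet (φ y) := by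
          rw [h.symm.nphi_cl1 φ h1]; exact hstA
        exact hNsB (G.adj_symm h5)
      · exact toB y (hNsB (h.mem_Ns_Nv φ h2))
      · -- M2 vertices map into B
        apply toB
        obtain ⟨b, hb⟩ := h.noiso (φ y)
        have hbN : b ∈ G.neighborSet (φ y) := hb
        rw [nbhd_phi] at hbN
        obtain ⟨c, hc, hcb⟩ := hbN
        have hcNu : c ∈ G.neighborSet u := (h.symm.far_clM_sub φ h3 hc).1
        have hbA : b ∈ A := hNtA (hcb ▸ h.mem_Nt_Nu φ hcNu)
        exact h.side_B_of_nbr hb hbA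
    have hcount := h.count_core φ A hP hQ
    have hcardA := h.card_A φ
    have hNucard : (G.neighborSet u).ncard = (cl1 G A v).ncard + (clM G A v).ncard := by
      omega
    by_cases hM2 : (clM G A v).Nonempty
    · obtain ⟨w', hw'⟩ := hM2
      have hw'B : φ w' ∈ B := by
        by_contra hcon
        rcases bip_mem_cases h.bip (φ w') with hA | hB
        · exact hQ w' (Or.inr (Or.inr hw')) hA
        · exact hcon hB
      rcases h.B_sub hw'B with hNu1 | hNv1
      · -- φ w' ∈ Nu : leads to t ∈ Nu, contradiction
        have hu_in : u ∈ G.neighborSet (φ w') := G.adj_symm hNu1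
        rw [nbhd_phi] at hu_in
        obtain ⟨z₁, hz₁, hz₁u⟩ := hu_in
        have hz₁Nu : z₁ ∈ G.neighborSet u := (h.symm.far_clM_sub φ hw' hz₁).1
        have hz₁u' : φ z₁ = u := hz₁u
        have h5 : φ v ∈ G.neighborSet (φ z₁) := adj_far φ (h.A2_sub_far_Nu hz₁Nu h.mem_A2)
        rw [hz₁u'] at h5
        exact h.disjNuNv h5 htNv
      · -- φ w' ∈ Nv : cardinality contradiction
        have hsub1 : cl1 G A v ∪ clM G A v ⊆ G.neighborSet (φ w') := by
          rintro a (ha | ha)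
          · have : φ w' ∈ G.neighborSet a := by rw [ha.2]; exact hNv1
            exact G.adj_symm this
          · exact G.adj_symm (ha.2.1 hNv1)
        have hcard1 : (cl1 G A v ∪ clM G A v).ncard
            = (cl1 G A v).ncard + (clM G A v).ncard := by
          apply Set.ncard_union_eq _ (Set.toFinite _) (Set.toFinite _)
          exact Set.disjoint_left.mpr fun a h1 h2 => h.symm.A1_disj_M1 h1 h2
        have hge : (G.neighborSet u).ncard ≤ (G.neighborSet (φ w')).ncard := by
          rw [hNucard, ← hcard1]
          exact Set.ncard_le_ncard hsub1 (Set.toFinite _)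
        have hle : (G.neighborSet (φ w')).ncard
            ≤ (G.neighborSet u \ G.neighborSet w').ncard := by
          have h6 : G.neighborSet (φ w') ⊆ φ.toEquiv '' (G.neighborSet u \ G.neighborSet w') := by
            intro b hb
            rw [nbhd_phi] at hb
            obtain ⟨c, hc, hcb⟩ := hb
            exact ⟨c, h.symm.far_clM_sub φ hw' hc, hcb⟩
          calc (G.neighborSet (φ w')).ncard
              ≤ (φ.toEquiv '' (G.neighborSet u \ G.neighborSet w')).ncard :=
                Set.ncard_le_ncard h6 (Set.toFinite _)
            _ = (G.neighborSet u \ G.neighborSet w').ncard := ncard_img φ _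
        have hlt : (G.neighborSet u \ G.neighborSet w').ncard < (G.neighborSet u).ncard := by
          apply Set.ncard_lt_ncard _ (Set.toFinite _)
          obtain ⟨z, hz1, hz2⟩ := h.symm.clM_meets_Nv hw'
          exact ⟨Set.diff_subset, fun hsub => (hsub hz2).2 hz1⟩
        omega
    · -- M2 empty : chase x
      rcases bip_mem_cases h.bip x with hxA | hxB
      · rcases h.classify φ hxA with h1 | h2 | h3 | h4
        · exact killA1 h1
        · have h6 := h.symm.nphi_cl1 φ h2
          rw [hxv] at h6
          have h7 : φ u ∈ G.neighborSet v := by rw [h6]; exact hstA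
          exact bip_not_adj_A h.bip h.hv hsA h7
        · exact h.kill_M1 φ h3 hxv
        · exact hM2 ⟨x, h4⟩
      · rcases h.B_sub hxB with h1 | h2
        · -- x ∈ Nu : B ⊆ N(φ u), contradiction with no_full
          apply h.no_full φ hsA
          intro b hb
          rcases h.B_sub hb with hbNu | hbNv
          · exact hs.2.1 hbNu
          · obtain ⟨c, hc, hcb⟩ := hNx ▸ hbNv
            rcases h.far_Nu_sub φ h1 hc with (hcA2 | hcM2) | hcNv
            · exact hcb ▸ h.mem_Ns_A2 φ hcA2
            · exact absurd ⟨c, hcM2⟩ hM2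
            · exact hcb ▸ h.mem_Ns_Nv φ hcNv
        · exact killNv h2

/-- CASE s ∈ M2 -/
lemma case_M2 (h : Ctx G A B u v) (φ : (G.square)ᶜ ≃g G) (hs : φ u ∈ clM G A v) : False := by
  have hsA : φ u ∈ A := hs.1
  have hNsB : G.neighborSet (φ u) ⊆ B := bip_nbr_B h.bip hsA
  have htNs : φ v ∈ G.neighborSet (φ u) := h.adj_st φ
  have htB : φ v ∈ B := hNsB htNs
  have hstA : φ u ∈ G.neighborSet (φ v) := G.adj_symm (h.adj_st φ)
  have hNtA : G.neighborSet (φ v) ⊆ A := bip_nbr_A h.bip htB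
  have hA1M2 : ∀ a ∈ cl1 G A u, φ a ∈ clM G A v := fun a ha =>
    h.symm.mem_M1_of_nbhd (by rw [h.nphi_cl1 φ ha]; exact hs.2)
  set x := φ.symm v with hxdef
  have hxv : φ x = v := φ.toEquiv.apply_symm_apply v
  have hNx : G.neighborSet v = φ.toEquiv '' (farSet G x) := by rw [← hxv, nbhd_phi]
  have killA1 : x ∈ cl1 G A u → False := by
    intro h1
    have h5 : v ∈ clM G A v := hxv ▸ hA1M2 x h1
    exact h5.2.2 subset_rfl
  have killNv : x ∈ G.neighborSet v → False := by
    intro h2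
    have h5 : φ u ∈ G.neighborSet v := hNx ▸ ⟨u, h.symm.A2_sub_far_Nu h2 h.mem_A1, rfl⟩
    exact bip_not_adj_A h.bip h.hv hsA h5
  rcases h.B_sub htB with htNu | htNv
  · -- SUBCASE t ∈ Nu
    have hA2Nu : ∀ a ∈ cl1 G A v, φ a ∈ G.neighborSet u := fun a ha => by
      have h1 : u ∈ G.neighborSet (φ a) := by
        rw [h.symm.nphi_cl1 φ ha]
        exact G.adj_symm htNu
      exact G.adj_symm h1
    rcases bip_mem_cases h.bip x with hxA | hxB
    · rcases h.classify φ hxA with h1 | h2 | h3 | h4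
      · exact killA1 h1
      · exact bip_not_both h.bip h.hv (h.Nu_sub_B (hxv ▸ hA2Nu x h2))
      · exact h.kill_M1 φ h3 hxv
      · obtain ⟨z₀, hz₀⟩ := h.symm.Nu_nonempty
        obtain ⟨c, hc, hcz⟩ := hNx ▸ hz₀
        have hcNu : c ∈ G.neighborSet u := (h.symm.far_clM_sub φ h4 hc).1
        exact bip_not_both h.bip (hcz ▸ hNtA (h.mem_Nt_Nu φ hcNu)) (h.symm.Nu_sub_B hz₀)
    · rcases h.B_sub hxB with h1 | h2
      · have h5 : φ v ∈ G.neighborSet v := hNx ▸ ⟨v, h.A2_sub_far_Nu h1 h.mem_A2, rfl⟩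
        exact h.disjNuNv htNu h5
      · exact killNv h2
  · -- SUBCASE t ∈ Nv : chase the preimage of u
    set y := φ.symm u with hydef
    have hyu : φ y = u := φ.toEquiv.apply_symm_apply u
    have hNy : G.neighborSet u = φ.toEquiv '' (farSet G y) := by rw [← hyu, nbhd_phi]
    rcases bip_mem_cases h.bip y with hyA | hyB
    · rcases h.classify φ hyA with h1 | h2 | h3 | h4
      · have h6 := h.nphi_cl1 φ h1
        rw [hyu] at h6
        obtain ⟨z', hz'⟩ := h.symm.Nu_nonempty
        have h7 : z' ∈ G.neighborSet u := by rw [h6]; exact hs.2.1 hz'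
        exact h.disjNuNv h7 hz'
      · have h6 := h.symm.nphi_cl1 φ h2
        rw [hyu] at h6
        have h7 : φ u ∈ G.neighborSet u := by rw [h6]; exact hstA
        exact bip_not_both h.bip hsA (h.Nu_sub_B h7)
      · -- y ∈ M1 : B ⊆ N(φ u), no_full
        apply h.no_full φ hsA
        intro b hb
        rcases h.B_sub hb with hbNu | hbNv
        · obtain ⟨c, hc, hcb⟩ := hNy ▸ hbNu
          have hcNv : c ∈ G.neighborSet v := (h.far_clM_sub φ h3 hc).1
          exact hcb ▸ h.mem_Ns_Nv φ hcNv
        · exact hs.2.1 hbNv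
      · exact h.symm.kill_M1 φ h4 hyu
    · rcases h.B_sub hyB with h1 | h2
      · have h5 : φ v ∈ G.neighborSet u := hNy ▸ ⟨v, h.A2_sub_far_Nu h1 h.mem_A2, rfl⟩
        exact h.disjNuNv h5 htNv
      · have h5 : φ u ∈ G.neighborSet u := hNy ▸ ⟨u, h.symm.A2_sub_far_Nu h2 h.mem_A1, rfl⟩
        exact bip_not_both h.bip hsA (h.Nu_sub_B h5)

/-- CASE s ∈ N(u) -/
lemma case_Nu (h : Ctx G A B u v) (φ : (G.square)ᶜ ≃g G) (hs : φ u ∈ G.neighborSet u) :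
    False := by
  have hsB : φ u ∈ B := h.Nu_sub_B hs
  have hNsA : G.neighborSet (φ u) ⊆ A := bip_nbr_A h.bip hsB
  have htNs : φ v ∈ G.neighborSet (φ u) := h.adj_st φ
  have htA : φ v ∈ A := hNsA htNs
  have hstB : φ u ∈ G.neighborSet (φ v) := G.adj_symm (h.adj_st φ)
  have hA1Nu : ∀ a ∈ cl1 G A u, φ a ∈ G.neighborSet u := fun a ha => by
    have h1 : u ∈ G.neighborSet (φ a) := by
      rw [h.nphi_cl1 φ ha]
      exact G.adj_symm hs
    exact G.adj_symm h1
  set x := φ.symm v with hxdef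
  have hxv : φ x = v := φ.toEquiv.apply_symm_apply v
  have hNx : G.neighborSet v = φ.toEquiv '' (farSet G x) := by rw [← hxv, nbhd_phi]
  rcases h.classify φ htA with h1t | h2t | h3t | h4t
  · -- t ∈ A1 : cardinality contradiction
    have h6 : G.neighborSet u = φ.toEquiv '' (cl1 G A u ∪ G.neighborSet u) :=
      h1t.2.symm.trans (h.symm.nphi_u φ)
    have h7 := congrArg Set.ncard h6
    rw [ncard_img, h.card_union_AB (fun a (ha : a ∈ cl1 G A u) => ha.1) h.Nu_sub_B] at h7
    have h8 : (cl1 G A u).ncard ≠ 0 := by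
      have : (cl1 G A u).Nonempty := ⟨u, h.mem_A1⟩
      simpa [Set.ncard_eq_zero (Set.toFinite _)] using this.ne_empty
    omega
  · -- t ∈ A2 : s ∈ Nv ∩ Nu
    have h6 : φ u ∈ G.neighborSet v := by rw [← h2t.2]; exact hstB
    exact h.disjNuNv hs h6
  · -- t ∈ M1 : chase x
    rcases bip_mem_cases h.bip x with hxA | hxB
    · rcases h.classify φ hxA with h1 | h2 | h3 | h4
      · exact bip_not_both h.bip h.hv (h.Nu_sub_B (hxv ▸ hA1Nu x h1))
      · have h6 := h.symm.nphi_cl1 φ h2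
        rw [hxv] at h6
        obtain ⟨z, hz⟩ := h.Nu_nonempty
        have h7 : z ∈ G.neighborSet v := by rw [h6]; exact h3t.2.1 hz
        exact h.disjNuNv hz h7
      · exact h.kill_M1 φ h3 hxv
      · -- x ∈ M2 : B ⊆ N t, no_full at t
        apply h.no_full φ h3t.1
        intro b hb
        rcases h.B_sub hb with hbNu | hbNv
        · exact h3t.2.1 hbNu
        · obtain ⟨c, hc, hcb⟩ := hNx ▸ hbNv
          have hcNu : c ∈ G.neighborSet u := (h.symm.far_clM_sub φ h4 hc).1
          exact hcb ▸ h.mem_Nt_Nu φ hcNu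
    · rcases h.B_sub hxB with h1 | h2
      · have h5 : φ v ∈ G.neighborSet v := hNx ▸ ⟨v, h.A2_sub_far_Nu h1 h.mem_A2, rfl⟩
        exact bip_not_both h.bip h3t.1 (h.symm.Nu_sub_B h5)
      · have h5 : φ u ∈ G.neighborSet v := hNx ▸ ⟨u, h.symm.A2_sub_far_Nu h2 h.mem_A1, rfl⟩
        exact h.disjNuNv hs h5
  · -- t ∈ M2 : the counting case
    have hNtB : G.neighborSet (φ v) ⊆ B := bip_nbr_B h.bip h4t.1
    have hA2M2 : ∀ a ∈ cl1 G A v, φ a ∈ clM G A v := fun a ha => by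
      apply h.symm.mem_M1_of_nbhd
      rw [h.symm.nphi_cl1 φ ha]
      exact h4t.2
    have hP : ∀ y, y ∈ cl1 G A u ∪ (G.neighborSet u ∪ clM G A u) → φ y ∈ B := by
      rintro y (h1 | h2 | h3)
      · exact h.Nu_sub_B (hA1Nu y h1)
      · exact hNtB (h.mem_Nt_Nu φ h2)
      · obtain ⟨b, hb⟩ := h.noiso (φ y)
        have hbN : b ∈ G.neighborSet (φ y) := hb
        rw [nbhd_phi] at hbN
        obtain ⟨c, hc, hcb⟩ := hbN
        have hcNv : c ∈ G.neighborSet v := (h.far_clM_sub φ h3 hc).1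
        have hbA : b ∈ A := hNsA (hcb ▸ h.mem_Ns_Nv φ hcNv)
        exact h.side_B_of_nbr hb hbA
    have hQ : ∀ y, y ∈ cl1 G A v ∪ (G.neighborSet v ∪ clM G A v) → φ y ∉ B := by
      have toA : ∀ y, φ y ∈ A → φ y ∉ B := fun y hA hB => bip_not_both h.bip hA hB
      rintro y (h1 | h2 | h3)
      · exact toA y (hA2M2 y h1).1
      · exact toA y (hNsA (h.mem_Ns_Nv φ h2))
      · apply toA
        obtain ⟨b, hb⟩ := h.noiso (φ y)
        have hbN : b ∈ G.neighborSet (φ y) := hb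
        rw [nbhd_phi] at hbN
        obtain ⟨c, hc, hcb⟩ := hbN
        have hcNu : c ∈ G.neighborSet u := (h.symm.far_clM_sub φ h3 hc).1
        have hbB : b ∈ B := hNtB (hcb ▸ h.mem_Nt_Nu φ hcNu)
        exact h.side_A_of_nbr hb hbB
    have hcount := h.count_core φ B hP hQ
    have hcardB := h.card_B
    have hNvcard : (G.neighborSet v).ncard = (cl1 G A u).ncard + (clM G A u).ncard := by
      omega
    by_cases hEx : ∃ w ∈ clM G A u, φ w ∈ G.neighborSet u
    · obtain ⟨w, hw, hwNu⟩ := hEx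
      have hsub1 : cl1 G A u ∪ clM G A u ⊆ G.neighborSet (φ w) := by
        rintro a (ha | ha)
        · have : φ w ∈ G.neighborSet a := by rw [ha.2]; exact hwNu
          exact G.adj_symm this
        · exact G.adj_symm (ha.2.1 hwNu)
      have hcard1 : (cl1 G A u ∪ clM G A u).ncard
          = (cl1 G A u).ncard + (clM G A u).ncard := by
        apply Set.ncard_union_eq _ (Set.toFinite _) (Set.toFinite _)
        exact Set.disjoint_left.mpr fun a ha1 ha2 => h.A1_disj_M1 ha1 ha2
      have hge : (G.neighborSet v).ncard ≤ (G.neighborSet (φ w)).ncard := by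
        rw [hNvcard, ← hcard1]
        exact Set.ncard_le_ncard hsub1 (Set.toFinite _)
      have hle : (G.neighborSet (φ w)).ncard
          ≤ (G.neighborSet v \ G.neighborSet w).ncard := by
        have h6 : G.neighborSet (φ w) ⊆ φ.toEquiv '' (G.neighborSet v \ G.neighborSet w) := by
          intro b hb
          rw [nbhd_phi] at hb
          obtain ⟨c, hc, hcb⟩ := hb
          exact ⟨c, h.far_clM_sub φ hw hc, hcb⟩
        calc (G.neighborSet (φ w)).ncard
            ≤ (φ.toEquiv '' (G.neighborSet v \ G.neighborSet w)).ncard :=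
              Set.ncard_le_ncard h6 (Set.toFinite _)
          _ = (G.neighborSet v \ G.neighborSet w).ncard := ncard_img φ _
      have hlt : (G.neighborSet v \ G.neighborSet w).ncard < (G.neighborSet v).ncard := by
        apply Set.ncard_lt_ncard _ (Set.toFinite _)
        obtain ⟨z, hz1, hz2⟩ := h.clM_meets_Nv hw
        exact ⟨Set.diff_subset, fun hsub => (hsub hz2).2 hz1⟩
      omega
    · -- no M1 vertex maps into Nu : B ⊆ N t, no_full at t
      apply h.no_full φ h4t.1
      intro b hb
      rcases h.B_sub hb with hbNu | hbNv
      · -- b ∈ Nu : find its preimage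
        set c := φ.symm b with hcdef
        have hcb : φ c = b := φ.toEquiv.apply_symm_apply b
        rcases bip_mem_cases h.bip c with hcA | hcB
        · rcases h.classify φ hcA with hc1 | hc2 | hc3 | hc4
          · exact hcb ▸ h.mem_Nt_A1 φ hc1
          · exact absurd (hcb ▸ (hA2M2 c hc2).1 : b ∈ A)
              (fun hA => bip_not_both h.bip hA (h.Nu_sub_B hbNu))
          · exact absurd ⟨c, hc3, hcb ▸ hbNu⟩ hEx
          · exact absurd (hQ c (Or.inr (Or.inr hc4)) : φ c ∉ B) (fun hn => hn (hcb ▸ h.Nu_sub_B hbNu))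
        · rcases h.B_sub hcB with hc1 | hc2
          · exact hcb ▸ h.mem_Nt_Nu φ hc1
          · exact absurd (hcb ▸ hNsA (h.mem_Ns_Nv φ hc2) : b ∈ A)
              (fun hA => bip_not_both h.bip hA (h.Nu_sub_B hbNu))
      · exact h4t.2.1 hbNv

/-- CASE s ∈ N(v) -/
lemma case_Nv (h : Ctx G A B u v) (φ : (G.square)ᶜ ≃g G) (hs : φ u ∈ G.neighborSet v) :
    False := by
  have hsB : φ u ∈ B := h.symm.Nu_sub_B hs
  have hNsA : G.neighborSet (φ u) ⊆ A := bip_nbr_A h.bip hsB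
  have htNs : φ v ∈ G.neighborSet (φ u) := h.adj_st φ
  have htA : φ v ∈ A := hNsA htNs
  have hstB : φ u ∈ G.neighborSet (φ v) := G.adj_symm (h.adj_st φ)
  have hA1Nv : ∀ a ∈ cl1 G A u, φ a ∈ G.neighborSet v := fun a ha => by
    have h1 : v ∈ G.neighborSet (φ a) := by
      rw [h.nphi_cl1 φ ha]
      exact G.adj_symm hs
    exact G.adj_symm h1
  set y := φ.symm u with hydef
  have hyu : φ y = u := φ.toEquiv.apply_symm_apply u
  have hNy : G.neighborSet u = φ.toEquiv '' (farSet G y) := by rw [← hyu, nbhd_phi]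
  rcases bip_mem_cases h.bip y with hyA | hyB
  · rcases h.classify φ hyA with h1 | h2 | h3 | h4
    · exact bip_not_both h.bip h.hu (h.symm.Nu_sub_B (hyu ▸ hA1Nv y h1))
    · have h6 := h.symm.nphi_cl1 φ h2
      rw [hyu] at h6
      have h7 : φ u ∈ G.neighborSet u := by rw [h6]; exact hstB
      exact h.disjNuNv h7 hs
    · -- y ∈ M1
      obtain ⟨z, hz⟩ := h.Nu_nonempty
      obtain ⟨c, hc, hcz⟩ := hNy ▸ hz
      have hcNv : c ∈ G.neighborSet v := (h.far_clM_sub φ h3 hc).1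
      exact bip_not_both h.bip (hcz ▸ hNsA (h.mem_Ns_Nv φ hcNv)) (h.Nu_sub_B hz)
    · exact h.symm.kill_M1 φ h4 hyu
  · rcases h.B_sub hyB with h1 | h2
    · have h5 : φ v ∈ G.neighborSet u := hNy ▸ ⟨v, h.A2_sub_far_Nu h1 h.mem_A2, rfl⟩
      exact bip_not_both h.bip htA (h.Nu_sub_B h5)
    · have h5 : φ u ∈ G.neighborSet u := hNy ▸ ⟨u, h.symm.A2_sub_far_Nu h2 h.mem_A1, rfl⟩
      exact h.disjNuNv h5 hs

/-- a bad pair leads to a contradiction -/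
theorem false_of_ctx (h : Ctx G A B u v) (φ : (G.square)ᶜ ≃g G) : False := by
  rcases bip_mem_cases h.bip (φ u) with hsA | hsB
  · rcases h.classify φ hsA with h1 | h2 | h3 | h4
    · exact h.case_A1 φ h1
    · exact h.case_A2 φ h2
    · exact h.case_M1 φ h3
    · exact h.case_M2 φ h4
  · rcases h.B_sub hsB with h1 | h2
    · exact h.case_Nu φ h1
    · exact h.case_Nv φ h2

end Ctx

/-- iso between complements -/
def isoCompl {X Y : SimpleGraph V} (e : X ≃g Y) : Xᶜ ≃g Yᶜ where
  toEquiv := e.toEquiv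
  map_rel_iff' := by
    intro a b
    simp only [compl_adj]
    constructor
    · rintro ⟨h1, h2⟩
      exact ⟨fun hab => h1 (by rw [hab]), fun had => h2 (e.map_rel_iff.mpr had)⟩
    · rintro ⟨h1, h2⟩
      exact ⟨fun hab => h1 (e.toEquiv.injective hab), fun had => h2 (e.map_rel_iff.mp had)⟩

/-- a squco graph has no isolated vertices -/
lemma noiso_of_squco [Nontrivial V] (ψ : G.square ≃g Gᶜ) (x : V) : ∃ y, G.Adj x y := by
  by_contra hno
  push_neg at hno
  have huniv : ∀ w, w ≠ ψ x → G.Adj (ψ x) w := by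
    intro w hw
    set a := ψ.symm w with hadef
    have haw : ψ a = w := ψ.toEquiv.apply_symm_apply w
    have hax : ¬ G.square.Adj x a := by
      rw [square_adj]
      push_neg
      intro _
      exact ⟨hno a, fun ⟨c, hc1, _⟩ => hno c hc1⟩
    have : ¬ Gᶜ.Adj (ψ x) (ψ a) := fun hc => hax (ψ.map_rel_iff.mp hc)
    rw [compl_adj] at this
    push_neg at this
    exact haw ▸ this (haw ▸ hw.symm : ψ x ≠ ψ a)
  by_cases hxx : x = ψ x
  · obtain ⟨w, hw⟩ := exists_ne x
    exact hno w (hxx ▸ huniv w (fun hc => hw (hc.trans hxx.symm)))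
  · exact hno (ψ x) (G.adj_symm (huniv x hxx))

/-- no independent triple in the square -/
lemma no3_of_squco (hbip : G.IsBipartitionOf A B) (ψ : G.square ≃g Gᶜ) (x y z : V)
    (hxy : x ≠ y) (hxz : x ≠ z) (hyz : y ≠ z) (h1 : ¬G.square.Adj x y)
    (h2 : ¬G.square.Adj x z) (h3 : ¬G.square.Adj y z) : False := by
  have adj_of : ∀ a b : V, a ≠ b → ¬G.square.Adj a b → G.Adj (ψ a) (ψ b) := by
    intro a b hab hnsq
    have : ¬ Gᶜ.Adj (ψ a) (ψ b) := fun hc => hnsq (ψ.map_rel_iff.mp hc)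
    rw [compl_adj] at this
    push_neg at this
    exact this (fun hc => hab (ψ.toEquiv.injective hc))
  have e1 := adj_of x y hxy h1
  have e2 := adj_of x z hxz h2
  have e3 := adj_of y z hyz h3
  have f1 := bip_flip hbip e1
  have f2 := bip_flip hbip e2
  have f3 := bip_flip hbip e3
  tauto

lemma bip_symm (hbip : G.IsBipartitionOf A B) : G.IsBipartitionOf B A := by
  constructor
  · intro w
    have := hbip.1 w
    tauto
  · intro a b hab
    exact (hbip.2 hab).symm

/-- any two distinct vertices on the same side have a common neighbor -/
lemma cn_same_side [Nontrivial V] (hbip : G.IsBipartitionOf A B)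
    (ψ : G.square ≃g Gᶜ) {x y : V} (hxy : x ≠ y)
    (hside : (x ∈ A ∧ y ∈ A) ∨ (x ∈ B ∧ y ∈ B)) : cn G x y := by
  by_contra hnc
  rcases hside with ⟨hx, hy⟩ | ⟨hx, hy⟩
  · exact Ctx.false_of_ctx
      ⟨hbip, noiso_of_squco ψ, no3_of_squco hbip ψ, hx, hy, hxy, hnc⟩ (phiOf ψ)
  · exact Ctx.false_of_ctx
      ⟨bip_symm hbip, noiso_of_squco ψ, no3_of_squco (bip_symm hbip) ψ, hx, hy, hxy, hnc⟩
      (phiOf ψ)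

/-- destructing walks of length at most 3 -/
lemma walk_cases3 {x y : V} (p : G.Walk x y) (hp : p.length ≤ 3) :
    x = y ∨ G.Adj x y ∨ cn G x y ∨ ∃ a b, G.Adj x a ∧ G.Adj a b ∧ G.Adj b y := by
  match p with
  | SimpleGraph.Walk.nil => exact Or.inl rfl
  | SimpleGraph.Walk.cons h SimpleGraph.Walk.nil => exact Or.inr (Or.inl h)
  | SimpleGraph.Walk.cons h (SimpleGraph.Walk.cons h2 SimpleGraph.Walk.nil) =>
      exact Or.inr (Or.inr (Or.inl ⟨_, h, h2⟩))
  | SimpleGraph.Walk.cons h (SimpleGraph.Walk.cons h2 (SimpleGraph.Walk.cons h3 SimpleGraph.Walk.nil)) =>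
      exact Or.inr (Or.inr (Or.inr ⟨_, _, h, h2, h3⟩))
  | SimpleGraph.Walk.cons h (SimpleGraph.Walk.cons h2 (SimpleGraph.Walk.cons h3 (SimpleGraph.Walk.cons h4 q))) =>
      simp only [SimpleGraph.Walk.length_cons] at hp
      omega

/-- if all same-side pairs have common neighbors then G² is the complement of the
bipartite complement -/
lemma square_eq_bipCompl_compl (hbip : G.IsBipartitionOf A B)
    (hP : ∀ x y : V, x ≠ y → (x ∈ A ∧ y ∈ A) ∨ (x ∈ B ∧ y ∈ B) → cn G x y) :
    G.square = (G.bipCompl A B)ᶜ := by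
  ext x y
  show x ≠ y ∧ (G.Adj x y ∨ cn G x y) ↔ (G.bipCompl A B)ᶜ.Adj x y
  rw [compl_adj]
  constructor
  · rintro ⟨hne, hor⟩
    refine ⟨hne, ?_⟩
    rintro ⟨-, hcross, hnadj⟩
    rcases hor with had | hcn
    · exact hnadj had
    · rcases hcross with ⟨hx, hy⟩ | ⟨hx, hy⟩
      · exact bip_no_cn_cross hbip hx hy hcn
      · exact bip_no_cn_cross hbip hy hx (cn_symm hcn)
  · rintro ⟨hne, hnbc⟩
    refine ⟨hne, ?_⟩
    by_cases had : G.Adj x y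
    · exact Or.inl had
    · right
      apply hP x y hne
      rcases bip_mem_cases hbip x with hx | hx <;> rcases bip_mem_cases hbip y with hy | hy
      · exact Or.inl ⟨hx, hy⟩
      · exact absurd ⟨hne, Or.inl ⟨hx, hy⟩, had⟩ hnbc
      · exact absurd ⟨hne, Or.inr ⟨hx, hy⟩, had⟩ hnbc
      · exact Or.inr ⟨hx, hy⟩

lemma walk_len2_cn {x y : V} (p : G.Walk x y) (hp : p.length = 2) : cn G x y := by
  match p with
  | SimpleGraph.Walk.nil => simp at hp
  | SimpleGraph.Walk.cons h SimpleGraph.Walk.nil => simp at hp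
  | SimpleGraph.Walk.cons h (SimpleGraph.Walk.cons h2 SimpleGraph.Walk.nil) =>
      exact ⟨_, h, h2⟩
  | SimpleGraph.Walk.cons h (SimpleGraph.Walk.cons h2 (SimpleGraph.Walk.cons h3 q)) =>
      simp only [SimpleGraph.Walk.length_cons] at hp
      omega

/-- forward direction -/
theorem forward_dir [Nontrivial V] (hbip : G.IsBipartitionOf A B) (ψ : G.square ≃g Gᶜ) :
    G.diam = 3 ∧ Nonempty (G ≃g G.bipCompl A B) := by
  have hP : ∀ x y : V, x ≠ y → (x ∈ A ∧ y ∈ A) ∨ (x ∈ B ∧ y ∈ B) → cn G x y :=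
    fun x y hxy hside => cn_same_side hbip ψ hxy hside
  have heq : G.square = (G.bipCompl A B)ᶜ := square_eq_bipCompl_compl hbip hP
  have heq2 : (G.square)ᶜ = G.bipCompl A B := by rw [heq, compl_compl]
  have hiso : Nonempty (G ≃g G.bipCompl A B) := ⟨heq2 ▸ (phiOf ψ).symm⟩
  refine ⟨?_, hiso⟩
  -- every pair is at extended distance at most 3
  have hle : ∀ x y : V, G.edist x y ≤ 3 := by
    intro x y
    by_cases hxy : x = y
    · subst hxy; rw [edist_self]; exact zero_le
    · have build2 : ∀ a b : V, cn G a b → G.edist a b ≤ 2 := by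
        rintro a b ⟨w, h1, h2⟩
        have := edist_le (SimpleGraph.Walk.cons h1 (SimpleGraph.Walk.cons h2 SimpleGraph.Walk.nil))
        simpa using this
      have same : ∀ a b : V, a ≠ b → ((a ∈ A ∧ b ∈ A) ∨ (a ∈ B ∧ b ∈ B)) → G.edist a b ≤ 3 := by
        intro a b hab hs
        exact le_trans (build2 a b (hP a b hab hs)) (by norm_num)
      have crossle : ∀ a b : V, a ∈ A → b ∈ B → G.edist a b ≤ 3 := by
        intro a b ha hb
        by_cases had : G.Adj a b
        · have := edist_le had.toWalk
          simpa using le_trans this (by norm_num : (1:ℕ∞) ≤ 3)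
        · obtain ⟨z, hz⟩ := noiso_of_squco ψ a
          have hzB : z ∈ B := bip_cross hbip hz ha
          have hzb : z ≠ b := fun he => had (he ▸ hz)
          obtain ⟨w, h1, h2⟩ := hP z b hzb (Or.inr ⟨hzB, hb⟩)
          have := edist_le (SimpleGraph.Walk.cons hz (SimpleGraph.Walk.cons h1
            (SimpleGraph.Walk.cons h2 SimpleGraph.Walk.nil)))
          simpa using this
      rcases bip_mem_cases hbip x with hx | hx <;> rcases bip_mem_cases hbip y with hy | hy
      · exact same x y hxy (Or.inl ⟨hx, hy⟩)
      · exact crossle x y hx hy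
      · rw [SimpleGraph.edist_comm]; exact crossle y x hy hx
      · exact same x y hxy (Or.inr ⟨hx, hy⟩)
  -- there is a non-adjacent cross pair
  have hex : ∃ x y : V, x ∈ A ∧ y ∈ B ∧ ¬G.Adj x y := by
    by_contra hall
    push_neg at hall
    obtain ⟨x0⟩ := (inferInstance : Nonempty V)
    obtain ⟨y0, hy0⟩ := noiso_of_squco ψ x0
    have hAB : A.Nonempty ∧ B.Nonempty := by
      rcases bip_mem_cases hbip x0 with h0 | h0
      · exact ⟨⟨x0, h0⟩, ⟨y0, bip_cross hbip hy0 h0⟩⟩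
      · exact ⟨⟨y0, bip_cross' hbip hy0 h0⟩, ⟨x0, h0⟩⟩
    obtain ⟨⟨a, ha⟩, ⟨b, hb⟩⟩ := hAB
    set p := ψ.symm a with hpdef
    set q := ψ.symm b with hqdef
    have hpa : ψ p = a := ψ.toEquiv.apply_symm_apply a
    have hqb : ψ q = b := ψ.toEquiv.apply_symm_apply b
    have hab : a ≠ b := fun he => bip_not_both hbip ha (he ▸ hb)
    have hpq : p ≠ q := fun he => hab (by rw [← hpa, ← hqb, he])
    have hsq : G.square.Adj p q := by
      rw [square_adj]
      refine ⟨hpq, ?_⟩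
      rcases bip_mem_cases hbip p with hp | hp <;> rcases bip_mem_cases hbip q with hq | hq
      · exact Or.inr (hP p q hpq (Or.inl ⟨hp, hq⟩))
      · exact Or.inl (hall p q hp hq)
      · exact Or.inl (G.adj_symm (hall q p hq hp))
      · exact Or.inr (hP p q hpq (Or.inr ⟨hp, hq⟩))
    have := ψ.map_rel_iff.mpr hsq
    rw [hpa, hqb, compl_adj] at this
    exact this.2 (hall a b ha hb)
  obtain ⟨x₀, y₀, hx₀, hy₀, hnadj⟩ := hex
  have hne₀ : x₀ ≠ y₀ := fun he => bip_not_both hbip hx₀ (he ▸ hy₀)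
  have hd3 : G.edist x₀ y₀ = 3 := by
    have h3 := hle x₀ y₀
    have htop : G.edist x₀ y₀ ≠ ⊤ := fun he => by rw [he] at h3; exact absurd h3 (by norm_num)
    lift G.edist x₀ y₀ to ℕ using htop with d hd
    have hd3' : d ≤ 3 := by exact_mod_cast h3
    have hd0 : d ≠ 0 := fun he => hne₀ (edist_eq_zero_iff.mp (by rw [← hd, he]; rfl))
    have hd1 : d ≠ 1 := fun he => hnadj (edist_eq_one_iff_adj.mp (by rw [← hd, he]; rfl))
    have hd2 : d ≠ 2 := by
      intro he
      obtain ⟨p, hp⟩ := exists_walk_of_edist_eq_coe (by rw [← hd, he] : G.edist x₀ y₀ = (2:ℕ))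
      exact bip_no_cn_cross hbip hx₀ hy₀ (walk_len2_cn p hp)
    have : d = 3 := by omega
    rw [this]
    norm_num
  have hediam : G.ediam = 3 := by
    apply le_antisymm (ediam_le_of_edist_le hle)
    rw [← hd3]
    exact edist_le_ediam
  rw [SimpleGraph.diam, hediam]
  rfl

/-- backward direction -/
theorem backward_dir (hbip : G.IsBipartitionOf A B) (hd : G.diam = 3)
    (χ : G ≃g G.bipCompl A B) : Nonempty (G.square ≃g Gᶜ) := by
  have hediam : G.ediam = 3 := by
    have := hd
    rw [SimpleGraph.diam, ENat.toNat_eq_iff (by norm_num)] at this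
    exact_mod_cast this
  have hle : ∀ x y : V, G.edist x y ≤ 3 := fun x y => hediam ▸ edist_le_ediam
  have hP : ∀ x y : V, x ≠ y → (x ∈ A ∧ y ∈ A) ∨ (x ∈ B ∧ y ∈ B) → cn G x y := by
    intro x y hxy hside
    have h3 := hle x y
    have htop : G.edist x y ≠ ⊤ := fun he => by rw [he] at h3; exact absurd h3 (by norm_num)
    obtain ⟨p, hp⟩ := exists_walk_of_edist_ne_top htop
    have hlen : p.length ≤ 3 := by
      have : (p.length : ℕ∞) ≤ 3 := by rw [hp]; exact h3
      exact_mod_cast this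
    rcases walk_cases3 p hlen with h0 | h1 | h2 | ⟨a, b, e1, e2, e3⟩
    · exact absurd h0 hxy
    · exfalso
      rcases hside with ⟨hx, hy⟩ | ⟨hx, hy⟩
      · exact bip_not_adj_A hbip hx hy h1
      · exact bip_not_adj_B hbip hx hy h1
    · exact h2
    · exfalso
      have f1 := bip_flip hbip e1
      have f2 := bip_flip hbip e2
      have f3 := bip_flip hbip e3
      have hs : x ∈ A ↔ y ∈ A := by
        rcases hside with ⟨hx, hy⟩ | ⟨hx, hy⟩
        · exact ⟨fun _ => hy, fun _ => hx⟩
        · exact ⟨fun hx' => absurd hx' (fun h' => bip_not_both hbip h' hx),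
            fun hy' => absurd hy' (fun h' => bip_not_both hbip h' hy)⟩
      tauto
  have heq : G.square = (G.bipCompl A B)ᶜ := square_eq_bipCompl_compl hbip hP
  exact ⟨heq ▸ (isoCompl χ).symm⟩

end Main

end Squco

/-- A nontrivial bipartite graph is square-complementary iff it has diameter 3
and is isomorphic to its bipartite complement. -/
theorem isSquco_bipartite_iff {V : Type*} [Fintype V] [Nontrivial V] (G : SimpleGraph V)
    {A B : Set V} (hbip : G.IsBipartitionOf A B) :
    G.IsSquco ↔ G.diam = 3 ∧ Nonempty (G ≃g G.bipCompl A B) := by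
  constructor
  · rintro ⟨ψ⟩
    exact Squco.forward_dir hbip ψ
  · rintro ⟨hd, ⟨χ⟩⟩
    exact ⟨Squco.backward_dir hbip hd χ |>.some⟩
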